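/- Let T be a symmetric bilinear form and J, J̃ vectors on Minkowski space ℝ⁴ satisfying the local mass-charge inequality. Let X be a future-directed null vector (η(X,X) = 0, X ≠ 0, X 0 > 0) and let N be a future-directed timelike vector, and suppose η(N, T♯X) = 0. Then there exists χ ≥ 0 such that T(u,v) = χ * η(X,u) * η(X,v) for all u, v, and moreover J = 0 and J̃ = 0. -/

import Mathlib

set_option maxHeartbeats 1000000
noncomputable def eta (x y : Fin 4 → ℝ) : ℝ :=
  x 0 * y 0 - x 1 * y 1 - x 2 * y 2 - x 3 * y 3

lemma eta_symm (x y : Fin 4 → ℝ) : eta x y = eta y x := by simp only [eta]; ring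
lemma eta_add_left (x y z : Fin 4 → ℝ) : eta (x + y) z = eta x z + eta y z := by
  simp only [eta, Pi.add_apply]; ring
lemma eta_smul_left (a : ℝ) (x z : Fin 4 → ℝ) : eta (a • x) z = a * eta x z := by
  simp only [eta, Pi.smul_apply, smul_eq_mul]; ring
lemma eta_add_right (x y z : Fin 4 → ℝ) : eta x (y + z) = eta x y + eta x z := by
  simp only [eta, Pi.add_apply]; ring
lemma eta_smul_right (a : ℝ) (x z : Fin 4 → ℝ) : eta x (a • z) = a * eta x z := by
  simp only [eta, Pi.smul_apply, smul_eq_mul]; ring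
lemma eta_zero_left (z : Fin 4 → ℝ) : eta 0 z = 0 := by simp [eta]

lemma eta_inj {v v' : Fin 4 → ℝ} (h : ∀ u, eta v u = eta v' u) : v = v' := by
  funext i
  fin_cases i
  · have := h ![1,0,0,0]; simpa [eta] using this
  · have := h ![0,1,0,0]; simpa [eta] using this
  · have := h ![0,0,1,0]; simpa [eta] using this
  · have := h ![0,0,0,1]; simpa [eta] using this

lemma quad_coeff {a b c : ℝ} (h : ∀ t : ℝ, 0 ≤ a + b*t + c*t^2) : 0 ≤ c := by
  by_contra hc
  push_neg at hc
  have hc0 : c ≠ 0 := ne_of_lt hc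
  have ha : 0 ≤ a := by have := h 0; linarith
  set t := Real.sqrt ((a+1)/(-c)) with ht
  have ht2 : t^2 = (a+1)/(-c) :=
    Real.sq_sqrt (le_of_lt (div_pos (by linarith) (by linarith)))
  have h5 : (a+1)/(-c) * (-c) = a+1 := div_mul_cancel₀ _ (by linarith)
  have hct : c * t^2 = -(a+1) := by rw [ht2]; linear_combination -h5
  have h1 := h t
  have h2 := h (-t)
  nlinarith

lemma lin_coeff {a b : ℝ} (h : ∀ t : ℝ, 0 ≤ a + b*t) : b = 0 := by
  rcases lt_trichotomy b 0 with hb | hb | hb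
  · have := h ((-(a+1))/b)
    rw [mul_div_cancel₀ _ (ne_of_lt hb)] at this
    linarith
  · exact hb
  · have := h ((-(a+1))/b)
    rw [mul_div_cancel₀ _ (ne_of_gt hb)] at this
    linarith

lemma orth_timelike {N v : Fin 4 → ℝ} (hN : 0 < eta N N) (ho : eta N v = 0)
    (hv : 0 ≤ eta v v) : v = 0 := by
  simp only [eta] at hN ho hv
  have hs : v 1 ^ 2 + v 2 ^ 2 + v 3 ^ 2 ≤ 0 := by
    by_contra h
    push_neg at h
    have lag : (N 1 * v 1 + N 2 * v 2 + N 3 * v 3)^2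
        ≤ (N 1^2 + N 2^2 + N 3^2) * (v 1^2 + v 2^2 + v 3^2) := by
      nlinarith [sq_nonneg (N 1 * v 2 - N 2 * v 1), sq_nonneg (N 1 * v 3 - N 3 * v 1),
        sq_nonneg (N 2 * v 3 - N 3 * v 2)]
    have h2 : (N 0 * v 0)^2 = (N 1 * v 1 + N 2 * v 2 + N 3 * v 3)^2 := by
      have : N 0 * v 0 = N 1 * v 1 + N 2 * v 2 + N 3 * v 3 := by linarith
      rw [this]
    have h3 : (N 0)^2 * (v 1^2 + v 2^2 + v 3^2) ≤ (N 0)^2 * (v 0)^2 := by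
      apply mul_le_mul_of_nonneg_left _ (sq_nonneg _)
      nlinarith
    have h4 : (N 1^2 + N 2^2 + N 3^2) * (v 1^2 + v 2^2 + v 3^2)
        < (N 0)^2 * (v 1^2 + v 2^2 + v 3^2) := by
      apply mul_lt_mul_of_pos_right _ h
      nlinarith
    nlinarith
  have h1 : v 1 = 0 := by nlinarith [sq_nonneg (v 1), sq_nonneg (v 2), sq_nonneg (v 3)]
  have h2 : v 2 = 0 := by nlinarith [sq_nonneg (v 1), sq_nonneg (v 2), sq_nonneg (v 3)]
  have h3 : v 3 = 0 := by nlinarith [sq_nonneg (v 1), sq_nonneg (v 2), sq_nonneg (v 3)]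
  have hN0 : N 0 ≠ 0 := by
    intro h; rw [h] at hN
    nlinarith [sq_nonneg (N 1), sq_nonneg (N 2), sq_nonneg (N 3)]
  have h0 : v 0 = 0 := by
    rw [h1, h2, h3] at ho
    have : N 0 * v 0 = 0 := by linarith
    exact (mul_eq_zero.mp this).resolve_left hN0
  funext i; fin_cases i <;> simp [h0, h1, h2, h3]

lemma causal_orth_null {X v : Fin 4 → ℝ} (hX : eta X X = 0) (hX0 : 0 < X 0)
    (hv : 0 ≤ eta v v) (ho : eta X v = 0) : ∃ c : ℝ, v = c • X := by
  simp only [eta] at hX hv ho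
  have hX0' : X 0 ≠ 0 := ne_of_gt hX0
  refine ⟨v 0 / X 0, ?_⟩
  have hkey : (v 1 * X 0 - v 0 * X 1) ^ 2 + (v 2 * X 0 - v 0 * X 2) ^ 2 + (v 3 * X 0 - v 0 * X 3) ^ 2
      = (X 0)^2 * (v 1^2 + v 2^2 + v 3^2 - (v 0)^2)
        + (v 0)^2 * ((X 1)^2 + (X 2)^2 + (X 3)^2 - (X 0)^2)
        + 2 * (v 0) * (X 0) * (X 0 * v 0 - (X 1 * v 1 + X 2 * v 2 + X 3 * v 3)) := by ring
  have z2 : (X 1)^2 + (X 2)^2 + (X 3)^2 - (X 0)^2 = 0 := by linear_combination -hX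
  have z3 : X 0 * v 0 - (X 1 * v 1 + X 2 * v 2 + X 3 * v 3) = 0 := by linear_combination ho
  have hvs : 0 ≤ (v 0)^2 - (v 1^2 + v 2^2 + v 3^2) := by nlinarith [hv]
  have hle : (v 1 * X 0 - v 0 * X 1) ^ 2 + (v 2 * X 0 - v 0 * X 2) ^ 2 + (v 3 * X 0 - v 0 * X 3) ^ 2 ≤ 0 := by
    rw [hkey, z2, z3]
    nlinarith [mul_nonneg (sq_nonneg (X 0)) hvs]
  have e1 : v 1 * X 0 - v 0 * X 1 = 0 := by
    have q : (v 1 * X 0 - v 0 * X 1)^2 = 0 :=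
      le_antisymm (by nlinarith [sq_nonneg (v 2 * X 0 - v 0 * X 2), sq_nonneg (v 3 * X 0 - v 0 * X 3)]) (sq_nonneg _)
    exact pow_eq_zero_iff (two_ne_zero) |>.mp q
  have e2 : v 2 * X 0 - v 0 * X 2 = 0 := by
    have q : (v 2 * X 0 - v 0 * X 2)^2 = 0 :=
      le_antisymm (by nlinarith [sq_nonneg (v 1 * X 0 - v 0 * X 1), sq_nonneg (v 3 * X 0 - v 0 * X 3)]) (sq_nonneg _)
    exact pow_eq_zero_iff (two_ne_zero) |>.mp q
  have e3 : v 3 * X 0 - v 0 * X 3 = 0 := by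
    have q : (v 3 * X 0 - v 0 * X 3)^2 = 0 :=
      le_antisymm (by nlinarith [sq_nonneg (v 1 * X 0 - v 0 * X 1), sq_nonneg (v 2 * X 0 - v 0 * X 2)]) (sq_nonneg _)
    exact pow_eq_zero_iff (two_ne_zero) |>.mp q
  funext i
  have hi : i = 0 ∨ i = 1 ∨ i = 2 ∨ i = 3 := by omega
  rcases hi with h | h | h | h <;> subst h <;>
    simp only [Pi.smul_apply, smul_eq_mul] <;>
    rw [div_mul_eq_mul_div, eq_div_iff hX0'] <;> linarith
lemma eta_sub_right (x y z : Fin 4 → ℝ) : eta x (y - z) = eta x y - eta x z := by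
  simp only [eta, Pi.sub_apply]; ring

lemma eta_expand1 (K w X : Fin 4 → ℝ) (t a : ℝ) :
    eta (K + t • w + a • X) (K + t • w + a • X)
      = eta K K + 2*t*(eta K w) + t^2*(eta w w) + 2*a*(eta K X)
        + 2*(t*a)*(eta w X) + a^2*(eta X X) := by
  simp only [eta, Pi.add_apply, Pi.smul_apply, smul_eq_mul]; ring

lemma eta_expand2 (A B : Fin 4 → ℝ) (t : ℝ) :
    eta (A + t • B) (A + t • B) = eta A A + (2 * eta A B) * t + (eta B B) * t^2 := by
  simp only [eta, Pi.add_apply, Pi.smul_apply, smul_eq_mul]; ring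

/-- Null-case of Lemma 2.8: if the local mass-charge inequality holds, X is
future-directed null, N is future-directed timelike and η(N, T♯X) = 0, then
T is null dust along X and the currents vanish. -/
theorem nullDust_of_localMassCharge
    (T : LinearMap.BilinForm ℝ (Fin 4 → ℝ)) (hT : ∀ x y, T x y = T y x)
    (J Jt : Fin 4 → ℝ)
    (Tsharp : (Fin 4 → ℝ) → (Fin 4 → ℝ))
    (hTs : ∀ x u, eta (Tsharp x) u = T x u)
    (hLMC : ∀ Z : Fin 4 → ℝ, eta Z Z ≥ 0 → Z 0 ≥ 0 →
        T Z Z ≥ 0 ∧ eta (Tsharp Z) (Tsharp Z) ≥ (eta J Z) ^ 2 + (eta Jt Z) ^ 2)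
    (X : Fin 4 → ℝ) (hXnull : eta X X = 0) (hXne : X ≠ 0) (hXfut : X 0 > 0)
    (N : Fin 4 → ℝ) (hNt : eta N N > 0) (hNfut : N 0 > 0)
    (hNTX : eta N (Tsharp X) = 0) :
    ∃ χ : ℝ, 0 ≤ χ ∧ (∀ u v : Fin 4 → ℝ, T u v = χ * eta X u * eta X v)
      ∧ J = 0 ∧ Jt = 0 := by
  have hX0' : X 0 ≠ 0 := ne_of_gt hXfut
  -- Step 1: T♯X = 0
  have hTX0 : Tsharp X = 0 := by
    have h := (hLMC X (ge_of_eq hXnull) (le_of_lt hXfut)).2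
    refine orth_timelike hNt hNTX ?_
    nlinarith [sq_nonneg (eta J X), sq_nonneg (eta Jt X)]
  have hTXu : ∀ u, T X u = 0 := by
    intro u; rw [← hTs X u, hTX0, eta_zero_left]
  -- the auxiliary null vector K
  set K : Fin 4 → ℝ := ![X 0, -X 1, -X 2, -X 3] with hKdef
  have hK0 : K 0 = X 0 := rfl
  have hK1 : K 1 = -X 1 := rfl
  have hK2 : K 2 = -X 2 := rfl
  have hK3 : K 3 = -X 3 := rfl
  have hKnull : eta K K = 0 := by
    simp only [eta, hK0, hK1, hK2, hK3]
    simp only [eta] at hXnull; linarith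
  have hXK : eta X K = X 0^2 + X 1^2 + X 2^2 + X 3^2 := by
    simp only [eta, hK0, hK1, hK2, hK3]; ring
  have hXKpos : 0 < eta X K := by
    rw [hXK]
    nlinarith [sq_nonneg (X 1), sq_nonneg (X 2), sq_nonneg (X 3), sq_nonneg (X 0), pow_pos hXfut 2]
  have hXK' : eta X K ≠ 0 := ne_of_gt hXKpos
  -- the key pointwise statement for vectors orthogonal to X
  have key : ∀ w : Fin 4 → ℝ, eta X w = 0 → T w w = 0 ∧ T K w = 0 := by
    intro w hw
    have hw' : eta w X = 0 := by rw [eta_symm]; exact hw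
    have hfam : ∀ t : ℝ,
        (0 ≤ T K K + (2 * T K w) * t + (T w w) * t^2)
        ∧ (0 ≤ eta (Tsharp K) (Tsharp K) + (2 * eta (Tsharp K) (Tsharp w)) * t
             + (eta (Tsharp w) (Tsharp w)) * t^2) := by
      intro t
      obtain ⟨a, ha1, ha2⟩ :
          ∃ a : ℝ, (0 ≤ eta K K + 2*t*(eta K w) + t^2*(eta w w) + 2*a*(eta X K))
            ∧ 0 ≤ K 0 + t * w 0 + a * X 0 := by
        set c1 := (-(eta K K) - 2*t*(eta K w) - t^2*(eta w w))/(2*eta X K) with hc1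
        set c2 := (-(K 0) - t * w 0)/(X 0) with hc2
        refine ⟨max c1 c2, ?_, ?_⟩
        · have hm : c1 ≤ max c1 c2 := le_max_left _ _
          have h2e : (0:ℝ) < 2 * eta X K := by linarith
          have hval : c1 * (2*eta X K) = -(eta K K) - 2*t*(eta K w) - t^2*(eta w w) :=
            div_mul_cancel₀ _ (ne_of_gt h2e)
          nlinarith [mul_le_mul_of_nonneg_right hm (le_of_lt h2e)]
        · have hm : c2 ≤ max c1 c2 := le_max_right _ _
          have hval : c2 * (X 0) = -(K 0) - t * w 0 := div_mul_cancel₀ _ hX0'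
          nlinarith [mul_le_mul_of_nonneg_right hm (le_of_lt hXfut)]
      set Z := K + t • w + a • X with hZ
      have hZc : eta Z Z ≥ 0 := by
        rw [hZ, eta_expand1, hXnull, hw', eta_symm K X] at *
        · linarith
      have hZ0 : Z 0 ≥ 0 := by
        simp only [hZ, Pi.add_apply, Pi.smul_apply, smul_eq_mul]
        linarith
      obtain ⟨h1, h2⟩ := hLMC Z hZc hZ0
      have hTZZ : T Z Z = T K K + (2 * T K w) * t + (T w w) * t^2 := by
        simp only [hZ, map_add, map_smul, LinearMap.add_apply, LinearMap.smul_apply,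
          smul_eq_mul]
        rw [hT K X, hT w X, hT w K, hTXu K, hTXu w, hTXu X]
        ring
      have hTsZ : Tsharp Z = Tsharp K + t • Tsharp w := by
        apply eta_inj; intro u
        rw [hTs, eta_add_left, eta_smul_left, hTs, hTs]
        simp only [hZ, map_add, LinearMap.add_apply, map_smul, LinearMap.smul_apply,
          smul_eq_mul]
        rw [hTXu u]
        ring
      constructor
      · rw [← hTZZ]; exact h1
      · have hEE : eta (Tsharp Z) (Tsharp Z)
            = eta (Tsharp K) (Tsharp K) + (2 * eta (Tsharp K) (Tsharp w)) * t
              + (eta (Tsharp w) (Tsharp w)) * t^2 := by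
          rw [hTsZ, eta_expand2]
        rw [← hEE]
        nlinarith [sq_nonneg (eta J Z), sq_nonneg (eta Jt Z)]
    have hBB : 0 ≤ eta (Tsharp w) (Tsharp w) := quad_coeff (fun t => (hfam t).2)
    have hBX : eta X (Tsharp w) = 0 := by
      rw [eta_symm, hTs, hT]; exact hTXu w
    obtain ⟨c, hc⟩ := causal_orth_null hXnull hXfut hBB hBX
    have hww : T w w = 0 := by
      rw [← hTs w w, hc, eta_smul_left, hw, mul_zero]
    have hKw : (2 : ℝ) * T K w = 0 := by
      refine lin_coeff (a := T K K) (fun t => ?_)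
      have h := (hfam t).1
      rw [hww] at h; linarith
    exact ⟨hww, by linarith⟩
  -- assemble
  have hTKK : 0 ≤ T K K :=
    (hLMC K (ge_of_eq hKnull) (by rw [hK0]; exact hXfut.le)).1
  have hform : ∀ u v : Fin 4 → ℝ,
      T u v = T K K / (eta X K)^2 * eta X u * eta X v := by
    intro u v
    set α := eta X u / eta X K with hα
    set β := eta X v / eta X K with hβ
    set wu := u - α • K with hwu
    set wv := v - β • K with hwv
    have hwu0 : eta X wu = 0 := by
      rw [hwu, eta_sub_right, eta_smul_right, hα, div_mul_cancel₀ _ hXK', sub_self]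
    have hwv0 : eta X wv = 0 := by
      rw [hwv, eta_sub_right, eta_smul_right, hβ, div_mul_cancel₀ _ hXK', sub_self]
    have huv : u = α • K + wu := by rw [hwu]; module
    have hvv : v = β • K + wv := by rw [hwv]; module
    have hcross : T wu wv = 0 := by
      have hsum := (key (wu + wv) (by rw [eta_add_right, hwu0, hwv0]; ring)).1
      have h1 := (key wu hwu0).1
      have h2 := (key wv hwv0).1
      have hexp : T (wu + wv) (wu + wv) = T wu wu + T wu wv + T wv wu + T wv wv := by
        simp only [map_add, LinearMap.add_apply]; ring
      rw [hexp, h1, h2, hT wv wu] at hsum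
      linarith
    calc T u v = T (α • K + wu) (β • K + wv) := by rw [← huv, ← hvv]
    _ = α * (β * T K K) + α * T K wv + β * T wu K + T wu wv := by
        simp only [map_add, map_smul, LinearMap.add_apply, LinearMap.smul_apply,
          smul_eq_mul]
        ring
    _ = α * β * T K K := by
        rw [(key wv hwv0).2, hT wu K, (key wu hwu0).2, hcross]; ring
    _ = T K K / (eta X K)^2 * eta X u * eta X v := by
        rw [hα, hβ]; field_simp
  refine ⟨T K K / (eta X K)^2, div_nonneg hTKK (sq_nonneg _), hform, ?_, ?_⟩
  all_goals {
    have hTsu : ∀ Zv, Tsharp Zv = (T K K / (eta X K)^2 * eta X Zv) • X := by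
      intro Zv; apply eta_inj; intro u
      rw [hTs, eta_smul_left, hform Zv u]
    have hzero : ∀ Z, eta Z Z ≥ 0 → Z 0 ≥ 0 → eta J Z = 0 ∧ eta Jt Z = 0 := by
      intro Z h1 h2
      have h := (hLMC Z h1 h2).2
      rw [hTsu Z, eta_smul_left, eta_smul_right, hXnull, mul_zero, mul_zero] at h
      constructor <;> nlinarith [sq_nonneg (eta J Z), sq_nonneg (eta Jt Z)]
    have z0 := hzero ![1,0,0,0] (by simp [eta]) (by norm_num)
    have z1 := hzero ![1,1,0,0] (by simp [eta]) (by norm_num)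
    have z2 := hzero ![1,0,1,0] (by simp [eta]) (by norm_num)
    have z3 := hzero ![1,0,0,1] (by simp [eta]) (by norm_num)
    simp only [eta] at z0 z1 z2 z3
    simp at z0 z1 z2 z3
    funext i
    have hi : i = 0 ∨ i = 1 ∨ i = 2 ∨ i = 3 := by omega
    rcases hi with h | h | h | h <;> subst h <;> simp only [Pi.zero_apply] <;>
      first
        | linarith [z0.1, z1.1, z2.1, z3.1]
        | linarith [z0.2, z1.2, z2.2, z3.2]
  }
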